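/- arXiv:2412.10938 — 4 statements merged into one kernel-verified Lean document; each statement's English description precedes it below -/
import Mathlib

section
/- Let q>1 be a real number. Then there exist K>0 and α∈ℝ such that |E_q(z)| ≤ K · exp( (log|z|)² / (2 log q) ) · |z|^α for every z∈ℂ∖{0}. -/
set_option autoImplicit false

open Complex Real

/-- The q-analog of the exponential `E_q(z) = ∑_{n ≥ 0} q^{-n(n-1)/2} z^n`. -/
noncomputable def Eq' (q : ℝ) (z : ℂ) : ℂ :=
  ∑' n : ℕ, z ^ n / (q : ℂ) ^ (n * (n - 1) / 2)

theorem Eq_upper_bound (q : ℝ) (hq : 1 < q) :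
    ∃ K : ℝ, 0 < K ∧ ∃ α : ℝ, ∀ z : ℂ, z ≠ 0 →
      ‖Eq' q z‖ ≤ K * Real.exp ((Real.log ‖z‖) ^ 2 / (2 * Real.log q)) * ‖z‖ ^ α := by
  have hq0 : (0:ℝ) < q := by linarith
  have hQ : 0 < Real.log q := Real.log_pos hq
  set Q := Real.log q with hQdef
  set t : ℝ := Real.exp (-(1/2) * Q) with ht_def
  have ht0 : 0 < t := Real.exp_pos _
  have ht1 : t < 1 := by
    rw [ht_def]
    apply Real.exp_lt_one_iff.mpr
    nlinarith
  have h1t : 0 < 1 - t := by linarith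
  refine ⟨Real.exp ((7/8) * Q) / (1 - t), by positivity, 1, ?_⟩
  intro z hz
  set r := ‖z‖ with hr_def
  have hr : 0 < r := norm_pos_iff.mpr hz
  set L := Real.log r with hL_def
  have hrL : Real.exp L = r := Real.exp_log hr
  have hqQ : Real.exp Q = q := Real.exp_log hq0
  set C : ℝ := r * Real.exp (L ^ 2 / (2 * Q) + (7/8) * Q) with hC_def
  have key : ∀ n : ℕ, ‖z ^ n / (q : ℂ) ^ (n * (n - 1) / 2)‖ ≤ C * t ^ n := by
    intro n
    have hm : (2 : ℝ) * (↑(n * (n - 1) / 2) : ℝ) = (n : ℝ) * ((n : ℝ) - 1) := by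
      rcases n with _ | k
      · simp
      · have h2 : 2 ∣ (k + 1) * k := by
          rw [Nat.mul_comm]; exact (Nat.even_mul_succ_self k).two_dvd
        have hdiv : 2 * ((k + 1) * k / 2) = (k + 1) * k := Nat.mul_div_cancel' h2
        have hc : (2 : ℝ) * ((((k + 1) * k / 2 : ℕ)) : ℝ) = ((k + 1 : ℕ) : ℝ) * (k : ℕ) := by
          exact_mod_cast congrArg (Nat.cast : ℕ → ℝ) hdiv
        simp only [Nat.add_sub_cancel]
        push_cast at hc ⊢
        linarith
    have hnorm : ‖z ^ n / (q : ℂ) ^ (n * (n - 1) / 2)‖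
        = r ^ n / q ^ (n * (n - 1) / 2) := by
      simp [norm_div, norm_pow, Complex.norm_real, abs_of_pos hq0, Real.norm_eq_abs, hr_def]
    have hLHS : r ^ n / q ^ (n * (n - 1) / 2)
        = Real.exp ((n : ℝ) * L - (↑(n * (n - 1) / 2) : ℝ) * Q) := by
      simp only [Real.exp_sub, Real.exp_nat_mul, hrL, hqQ]
    have hRHS : C * t ^ n
        = Real.exp (L + (L ^ 2 / (2 * Q) + (7/8) * Q) + (n : ℝ) * (-(1/2) * Q)) := by
      simp only [Real.exp_add, Real.exp_nat_mul, hrL, hC_def, ht_def]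
      try ring
    rw [hnorm, hLHS, hRHS]
    apply Real.exp_le_exp.mpr
    set m : ℝ := (↑(n * (n - 1) / 2) : ℝ) with hm_def
    have key2 : ((n : ℝ) * L - m * Q) * (2 * Q) ≤
        (L + (L ^ 2 / (2 * Q) + (7/8) * Q) + (n : ℝ) * (-(1/2) * Q)) * (2 * Q) := by
      have hdiv : L ^ 2 / (2 * Q) * (2 * Q) = L ^ 2 := by field_simp
      nlinarith [sq_nonneg (L + Q - Q * (n : ℝ)), sq_nonneg Q, mul_pos hQ hQ]
    exact le_of_mul_le_mul_right key2 (by positivity)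
  have hsum : HasSum (fun n : ℕ => C * t ^ n) (C * (1 - t)⁻¹) :=
    (hasSum_geometric_of_lt_one ht0.le ht1).mul_left C
  have hbound : ‖Eq' q z‖ ≤ C * (1 - t)⁻¹ := by
    unfold Eq'
    exact tsum_of_norm_bounded hsum key
  refine hbound.trans (le_of_eq ?_)
  rw [Real.rpow_one, hC_def, Real.exp_add, div_eq_mul_inv]
  ring
end

section
/- Let q>1 be a real number. Then there exists C₁>0 such that |exp_q(z)| ≤ C₁ · exp( (log|z|)² / (2 log q) ) · |z|^{ log(q−1)/log q − 1/2 } for every z∈ℂ with |z|≥1. -/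
set_option autoImplicit false

open Complex Real

/-- The q-factorial `[n]_q! = ∏_{j=1}^n (q^j - 1)/(q - 1)`. -/
noncomputable def qFactorial (q : ℝ) (n : ℕ) : ℝ :=
  ∏ j ∈ Finset.range n, ((q ^ (j + 1) - 1) / (q - 1))

/-- The q-exponential `exp_q(z) = ∑_{n ≥ 0} z^n / [n]_q!`. -/
noncomputable def qExp (q : ℝ) (z : ℂ) : ℂ :=
  ∑' n : ℕ, z ^ n / (qFactorial q n : ℂ)

open Finset in
private lemma gauss_term_cast' (n : ℕ) : (n:ℝ) ≤ (n:ℝ)^2 := by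
  rcases Nat.eq_zero_or_pos n with h|h
  · simp [h]
  · have : (1:ℝ) ≤ n := by exact_mod_cast h
    nlinarith

open Finset in
private lemma gauss_sum_bound' (c x : ℝ) (hc : 0 < c) :
    Summable (fun n : ℕ => Real.exp (-c * ((n:ℝ) - x)^2)) ∧
    ∑' n : ℕ, Real.exp (-c * ((n:ℝ) - x)^2) ≤ 2 / (1 - Real.exp (-c)) := by
  set m := ⌈x⌉₊ with hm
  have hr0 : (0:ℝ) ≤ Real.exp (-c) := (Real.exp_pos _).le
  have hr1 : Real.exp (-c) < 1 := by
    rw [Real.exp_lt_one_iff]; linarith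
  have hxm : x ≤ (m:ℝ) := Nat.le_ceil x
  have htail : ∀ n : ℕ, Real.exp (-c * ((↑(n + m):ℝ) - x)^2) ≤ Real.exp (-c) ^ n := by
    intro n
    rw [← Real.exp_nat_mul]
    apply Real.exp_le_exp.mpr
    have h1 : (n:ℝ) ≤ (↑(n+m):ℝ) - x := by push_cast; linarith [Nat.cast_nonneg (α := ℝ) m]
    have h2 : (n:ℝ)^2 ≤ ((↑(n+m):ℝ) - x)^2 :=
      pow_le_pow_left₀ (Nat.cast_nonneg n) h1 2
    nlinarith [gauss_term_cast' n]
  have hgeo : Summable (fun n : ℕ => Real.exp (-c) ^ n) :=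
    summable_geometric_of_lt_one hr0 hr1
  have hsum_tail : Summable (fun n : ℕ => Real.exp (-c * ((↑(n + m):ℝ) - x)^2)) :=
    Summable.of_nonneg_of_le (fun n => (Real.exp_pos _).le) htail hgeo
  have hsum : Summable (fun n : ℕ => Real.exp (-c * ((n:ℝ) - x)^2)) :=
    (summable_nat_add_iff m).mp hsum_tail
  refine ⟨hsum, ?_⟩
  have hgeo_tsum : ∑' n : ℕ, Real.exp (-c) ^ n = (1 - Real.exp (-c))⁻¹ :=
    tsum_geometric_of_lt_one hr0 hr1
  have htail_tsum : ∑' n : ℕ, Real.exp (-c * ((↑(n + m):ℝ) - x)^2) ≤ (1 - Real.exp (-c))⁻¹ := by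
    rw [← hgeo_tsum]
    exact Summable.tsum_le_tsum htail hsum_tail hgeo
  have hhead : ∑ n ∈ range m, Real.exp (-c * ((n:ℝ) - x)^2) ≤ (1 - Real.exp (-c))⁻¹ := by
    have hstep : ∀ n ∈ range m, Real.exp (-c * ((n:ℝ) - x)^2) ≤ Real.exp (-c) ^ (m - 1 - n) := by
      intro n hn
      rw [mem_range] at hn
      have hm1 : 1 ≤ m := Nat.one_le_iff_ne_zero.mpr (by omega)
      have hx0 : 0 ≤ x := by
        by_contra h
        push_neg at h
        have : m = 0 := by simp [hm, Nat.ceil_eq_zero.mpr h.le]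
        omega
      have hxlt : (m:ℝ) < x + 1 := Nat.ceil_lt_add_one hx0
      rw [← Real.exp_nat_mul]
      apply Real.exp_le_exp.mpr
      have hcast : (↑(m - 1 - n):ℝ) = (m:ℝ) - 1 - n := by
        have h1 : m - 1 - n = m - (1 + n) := by omega
        rw [h1, Nat.cast_sub (by omega)]
        push_cast; ring
      have hk1 : (0:ℝ) ≤ (m:ℝ) - 1 - n := by
        have : (n:ℝ) + 1 ≤ m := by exact_mod_cast hn
        linarith
      have hk2 : (m:ℝ) - 1 - n ≤ x - n := by linarith
      have hk3 : ((m:ℝ) - 1 - n)^2 ≤ (x - n)^2 := pow_le_pow_left₀ hk1 hk2 2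
      have hk4 : (↑(m-1-n):ℝ) ≤ (↑(m-1-n):ℝ)^2 := gauss_term_cast' _
      rw [hcast] at hk4 ⊢
      nlinarith
    calc ∑ n ∈ range m, Real.exp (-c * ((n:ℝ) - x)^2)
        ≤ ∑ n ∈ range m, Real.exp (-c) ^ (m - 1 - n) := Finset.sum_le_sum hstep
      _ = ∑ n ∈ range m, Real.exp (-c) ^ n :=
          Finset.sum_range_reflect (fun j => Real.exp (-c) ^ j) m
      _ ≤ (1 - Real.exp (-c))⁻¹ := by
          rw [← hgeo_tsum]
          exact Summable.sum_le_tsum (range m) (fun i _ => pow_nonneg hr0 i) hgeo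
  calc ∑' n : ℕ, Real.exp (-c * ((n:ℝ) - x)^2)
      = ∑ n ∈ range m, Real.exp (-c * ((n:ℝ) - x)^2)
        + ∑' n : ℕ, Real.exp (-c * ((↑(n + m):ℝ) - x)^2) := (Summable.sum_add_tsum_nat_add m hsum).symm
    _ ≤ (1 - Real.exp (-c))⁻¹ + (1 - Real.exp (-c))⁻¹ := add_le_add hhead htail_tsum
    _ = 2 / (1 - Real.exp (-c)) := by ring

open Finset in
private lemma sum_range_succ_cast' (n : ℕ) : ((∑ j ∈ range n, (j+1) : ℕ) : ℝ) = n*(n+1)/2 := by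
  have h : 2 * ∑ j ∈ range n, (j+1) = n*(n+1) := by
    induction n with
    | zero => simp
    | succ k ih => rw [Finset.sum_range_succ, Nat.mul_add, ih]; ring
  have h2 : (2:ℝ) * ((∑ j ∈ range n, (j+1) : ℕ) : ℝ) = n*(n+1) := by exact_mod_cast h
  linarith

open Finset in
private lemma qFactorial_pos' (q : ℝ) (hq : 1 < q) (n : ℕ) : 0 < qFactorial q n := by
  apply Finset.prod_pos
  intro j _
  apply div_pos _ (by linarith)
  have : (1:ℝ) < q ^ (j+1) := one_lt_pow₀ hq (by omega)
  linarith

open Finset in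
private lemma qFactorial_lb' (q : ℝ) (hq : 1 < q) (n : ℕ) :
    Real.exp (-(q/(q-1)^2)) * ((q-1)⁻¹ ^ n * q ^ (∑ j ∈ range n, (j+1))) ≤ qFactorial q n := by
  have hq0 : 0 < q := by linarith
  have hq1 : 0 < q - 1 := by linarith
  have hfac : ∀ j : ℕ, Real.exp (-(q/(q-1)) * (q⁻¹)^(j+1)) * ((q-1)⁻¹ * q^(j+1))
      ≤ (q ^ (j+1) - 1) / (q - 1) := by
    intro j
    have hqp : (0:ℝ) < q ^ (j+1) := pow_pos hq0 _
    have ht : (0:ℝ) < (q⁻¹)^(j+1) := pow_pos (inv_pos.mpr hq0) _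
    have htq : (q⁻¹)^(j+1) ≤ q⁻¹ := by
      apply pow_le_of_le_one (le_of_lt (inv_pos.mpr hq0)) (by
        rw [inv_le_one_iff₀]; right; linarith) (by omega)
    set t : ℝ := (q⁻¹)^(j+1) with htdef
    have hqt : q^(j+1) * t = 1 := by
      rw [htdef, ← mul_pow]
      simp [mul_inv_cancel₀ (ne_of_gt hq0)]
    have hexp : (q/(q-1)) * t + 1 ≤ Real.exp ((q/(q-1)) * t) := Real.add_one_le_exp _
    have hc0 : 0 < q/(q-1) := div_pos hq0 hq1
    have htlt : t < 1 := by
      have : q⁻¹ < 1 := by rw [inv_lt_one_iff₀]; right; exact hq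
      linarith
    have hkey : Real.exp (-(q/(q-1)) * t) ≤ 1 - t := by
      have hpos : 0 < (q/(q-1)) * t + 1 := by positivity
      have h1 : Real.exp (-(q/(q-1)) * t) ≤ ((q/(q-1)) * t + 1)⁻¹ := by
        rw [neg_mul, Real.exp_neg]
        exact inv_anti₀ hpos hexp
      have hcc : (q/(q-1)) * (q-1) = q := div_mul_cancel₀ q (ne_of_gt hq1)
      have hqi : q⁻¹ * q = 1 := inv_mul_cancel₀ (ne_of_gt hq0)
      have h2 : ((q/(q-1)) * t + 1)⁻¹ ≤ 1 - t := by
        rw [inv_le_iff_one_le_mul₀ hpos]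
        nlinarith
      linarith
    calc Real.exp (-(q/(q-1)) * t) * ((q-1)⁻¹ * q^(j+1))
        ≤ (1 - t) * ((q-1)⁻¹ * q^(j+1)) := by
          apply mul_le_mul_of_nonneg_right hkey (by positivity)
      _ = (q ^ (j+1) - 1) / (q - 1) := by
          field_simp
          nlinarith [hqt]
  have hsumgeo : ∑ j ∈ range n, (q⁻¹)^(j+1) ≤ (q-1)⁻¹ := by
    have hlt : q⁻¹ < 1 := by rw [inv_lt_one_iff₀]; right; exact hq
    have h0 : (0:ℝ) ≤ q⁻¹ := (inv_pos.mpr hq0).le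
    have h1 : ∑ j ∈ range n, (q⁻¹)^(j+1) = q⁻¹ * ∑ j ∈ range n, (q⁻¹)^j := by
      rw [Finset.mul_sum]; congr 1; ext j; ring
    have h2 : ∑ j ∈ range n, (q⁻¹)^j ≤ (1 - q⁻¹)⁻¹ := by
      rw [← tsum_geometric_of_lt_one h0 hlt]
      exact Summable.sum_le_tsum (range n) (fun i _ => pow_nonneg h0 i)
        (summable_geometric_of_lt_one h0 hlt)
    rw [h1]
    calc q⁻¹ * ∑ j ∈ range n, (q⁻¹)^j ≤ q⁻¹ * (1 - q⁻¹)⁻¹ :=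
          mul_le_mul_of_nonneg_left h2 h0
      _ = (q-1)⁻¹ := by
          rw [← mul_inv]
          congr 1
          field_simp
  calc Real.exp (-(q/(q-1)^2)) * ((q-1)⁻¹ ^ n * q ^ (∑ j ∈ range n, (j+1)))
      ≤ Real.exp (-(q/(q-1)) * ∑ j ∈ range n, (q⁻¹)^(j+1))
          * ((q-1)⁻¹ ^ n * q ^ (∑ j ∈ range n, (j+1))) := by
        apply mul_le_mul_of_nonneg_right _ (by positivity)
        apply Real.exp_le_exp.mpr
        have hc0 : (0:ℝ) ≤ q/(q-1) := le_of_lt (div_pos hq0 hq1)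
        have h1 : (q/(q-1)) * ∑ j ∈ range n, (q⁻¹)^(j+1) ≤ (q/(q-1)) * (q-1)⁻¹ :=
          mul_le_mul_of_nonneg_left hsumgeo hc0
        have h2 : (q/(q-1)) * (q-1)⁻¹ = q/(q-1)^2 := by
          rw [div_eq_mul_inv, div_eq_mul_inv, sq, mul_inv, mul_assoc]
        linarith
    _ = ∏ j ∈ range n, (Real.exp (-(q/(q-1)) * (q⁻¹)^(j+1)) * ((q-1)⁻¹ * q^(j+1))) := by
        simp only [Finset.prod_mul_distrib, Finset.prod_const, Finset.card_range,
          Finset.prod_pow_eq_pow_sum, ← Real.exp_sum, ← Finset.mul_sum]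
    _ ≤ ∏ j ∈ range n, ((q ^ (j+1) - 1) / (q - 1)) := by
        apply Finset.prod_le_prod _ (fun j _ => hfac j)
        intro j _
        positivity
    _ = qFactorial q n := rfl

theorem qExp_upper_bound (q : ℝ) (hq : 1 < q) :
    ∃ C₁ : ℝ, 0 < C₁ ∧ ∀ z : ℂ, 1 ≤ ‖z‖ →
      ‖qExp q z‖ ≤ C₁ * Real.exp ((Real.log ‖z‖) ^ 2 / (2 * Real.log q)) *
        ‖z‖ ^ (Real.log (q - 1) / Real.log q - 1 / 2) := by
  have hq0 : 0 < q := by linarith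
  have hq1 : 0 < q - 1 := by linarith
  set L : ℝ := Real.log q with hLdef
  have hL : 0 < L := Real.log_pos hq
  set D : ℝ := Real.log (q - 1) with hDdef
  have heD : Real.exp D = q - 1 := Real.exp_log hq1
  have heL : Real.exp L = q := Real.exp_log hq0
  have hden : 0 < 1 - Real.exp (-(L/2)) := by
    have : Real.exp (-(L/2)) < 1 := by rw [Real.exp_lt_one_iff]; linarith
    linarith
  refine ⟨Real.exp (q/(q-1)^2) * Real.exp (L/8 + D^2/(2*L) - D/2)
      * (2 / (1 - Real.exp (-(L/2)))), by positivity, ?_⟩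
  intro z hz
  set r : ℝ := ‖z‖ with hrdef
  have hr0 : 0 < r := lt_of_lt_of_le one_pos hz
  set A : ℝ := Real.log r with hAdef
  have hA0 : 0 ≤ A := Real.log_nonneg hz
  have heA : Real.exp A = r := Real.exp_log hr0
  set B : ℝ := A + D with hBdef
  set x : ℝ := B/L - 1/2 with hxdef
  set K : ℝ := Real.exp (q/(q-1)^2) * Real.exp (B^2/(2*L) - B/2 + L/8) with hKdef
  have hK0 : 0 < K := by positivity
  -- term bound
  have hterm : ∀ n : ℕ, ‖z ^ n / (qFactorial q n : ℂ)‖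
      ≤ K * Real.exp (-(L/2) * ((n:ℝ) - x)^2) := by
    intro n
    have hF : 0 < qFactorial q n := qFactorial_pos' q hq n
    have hnorm : ‖z ^ n / (qFactorial q n : ℂ)‖ = r ^ n / qFactorial q n := by
      rw [norm_div, norm_pow]
      congr 1
      rw [Complex.norm_real, Real.norm_eq_abs, abs_of_pos hF]
    rw [hnorm]
    set G : ℝ := Real.exp (-(q/(q-1)^2)) * ((q-1)⁻¹ ^ n * q ^ (∑ j ∈ Finset.range n, (j+1)))
      with hGdef
    have hG0 : 0 < G := by positivity
    have hGF : G ≤ qFactorial q n := qFactorial_lb' q hq n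
    have h1 : r ^ n / qFactorial q n ≤ r ^ n / G :=
      div_le_div_of_nonneg_left (pow_nonneg hr0.le n) hG0 hGF
    refine h1.trans ?_
    -- rewrite everything as exponentials
    have hSn : ((∑ j ∈ Finset.range n, (j+1) : ℕ) : ℝ) = n*(n+1)/2 := sum_range_succ_cast' n
    have hrn : r ^ n = Real.exp (n * A) := by
      rw [← heA, ← Real.exp_nat_mul]
    have hq1n : (q-1)⁻¹ ^ n = Real.exp (-(n * D)) := by
      rw [← heD, ← Real.exp_neg, ← Real.exp_nat_mul]
      congr 1
      ring
    have hqS : q ^ (∑ j ∈ Finset.range n, (j+1)) = Real.exp (L * (n*(n+1)/2)) := by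
      rw [← heL, ← Real.exp_nat_mul]
      congr 1
      rw [hSn]
      ring
    have hGexp : G = Real.exp (-(q/(q-1)^2)) * Real.exp (-(n*D) + L * (n*(n+1)/2)) := by
      rw [hGdef, hq1n, hqS, ← Real.exp_add]
    have hid : (n:ℝ) * A - (-(n*D) + L * (n*(n+1)/2))
        = B^2/(2*L) - B/2 + L/8 + (-(L/2) * ((n:ℝ) - x)^2) := by
      rw [hxdef, hBdef]
      field_simp
      ring
    have : r ^ n / G = K * Real.exp (-(L/2) * ((n:ℝ) - x)^2) := by
      rw [hrn, hGexp, hKdef]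
      rw [div_eq_iff (by positivity)]
      rw [← Real.exp_add, ← Real.exp_add, ← Real.exp_add, ← Real.exp_add]
      congr 1
      have := hid
      linarith
    linarith [this.le]
  obtain ⟨hgsum, hgbound⟩ := gauss_sum_bound' (L/2) x (by linarith)
  have hgsumK : Summable (fun n : ℕ => K * Real.exp (-(L/2) * ((n:ℝ) - x)^2)) := hgsum.mul_left K
  have hsummable : Summable (fun n : ℕ => ‖z ^ n / (qFactorial q n : ℂ)‖) :=
    Summable.of_nonneg_of_le (fun n => norm_nonneg _) hterm hgsumK
  have hnorm_le : ‖qExp q z‖ ≤ ∑' n : ℕ, ‖z ^ n / (qFactorial q n : ℂ)‖ :=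
    norm_tsum_le_tsum_norm hsummable
  have htsum_le : ∑' n : ℕ, ‖z ^ n / (qFactorial q n : ℂ)‖
      ≤ K * (2 / (1 - Real.exp (-(L/2)))) := by
    calc ∑' n : ℕ, ‖z ^ n / (qFactorial q n : ℂ)‖
        ≤ ∑' n : ℕ, K * Real.exp (-(L/2) * ((n:ℝ) - x)^2) :=
          Summable.tsum_le_tsum hterm hsummable hgsumK
      _ = K * ∑' n : ℕ, Real.exp (-(L/2) * ((n:ℝ) - x)^2) := tsum_mul_left
      _ ≤ K * (2 / (1 - Real.exp (-(L/2)))) := mul_le_mul_of_nonneg_left hgbound hK0.le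
  -- final constant computation
  have hrpow : r ^ (D/L - 1/2) = Real.exp (A * (D/L - 1/2)) := by
    rw [Real.rpow_def_of_pos hr0, ← hAdef]
  have hfinal : K * (2 / (1 - Real.exp (-(L/2))))
      = Real.exp (q/(q-1)^2) * Real.exp (L/8 + D^2/(2*L) - D/2)
        * (2 / (1 - Real.exp (-(L/2)))) * Real.exp (A^2/(2*L)) * r ^ (D/L - 1/2) := by
    rw [hrpow, hKdef]
    have hid2 : B^2/(2*L) - B/2 + L/8 = (L/8 + D^2/(2*L) - D/2) + A^2/(2*L) + A * (D/L - 1/2) := by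
      rw [hBdef]
      field_simp
      ring
    rw [hid2, Real.exp_add, Real.exp_add]
    ring
  calc ‖qExp q z‖ ≤ K * (2 / (1 - Real.exp (-(L/2)))) := hnorm_le.trans htsum_le
    _ = Real.exp (q/(q-1)^2) * Real.exp (L/8 + D^2/(2*L) - D/2)
        * (2 / (1 - Real.exp (-(L/2)))) * Real.exp (A^2/(2*L)) * r ^ (D/L - 1/2) := hfinal
    _ = Real.exp (q/(q-1)^2) * Real.exp (L/8 + D^2/(2*L) - D/2) * (2 / (1 - Real.exp (-(L/2))))
        * Real.exp ((Real.log r)^2 / (2*L)) * r ^ (D/L - 1/2) := by rw [← hAdef]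
end

section
/- Let q>1 be a real number. Then the limit lim_{n→∞} ( [n]_q! / q^{n(n−1)/2} ) · ((q−1)/q)^n exists, equals the convergent infinite product ∏_{j=1}^∞ (1 − q^{−j}), and is a strictly positive real number. -/
set_option autoImplicit false

open Real Filter

theorem qFactorial_asymptotic (q : ℝ) (hq : 1 < q) :
    Multipliable (fun j : ℕ => 1 - q⁻¹ ^ (j + 1)) ∧
    0 < (∏' j : ℕ, (1 - q⁻¹ ^ (j + 1))) ∧
    Tendsto (fun n : ℕ =>
        qFactorial q n / q ^ (n * (n - 1) / 2) * ((q - 1) / q) ^ n)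
      atTop (nhds (∏' j : ℕ, (1 - q⁻¹ ^ (j + 1)))) := by
  have hq0 : (0:ℝ) < q := lt_trans one_pos hq
  set r : ℝ := q⁻¹ with hr
  have hr0 : 0 < r := inv_pos.mpr hq0
  have hr1 : r < 1 := inv_lt_one_of_one_lt₀ hq
  -- positivity of factors
  have hpos : ∀ j : ℕ, 0 < 1 - r ^ (j + 1) := fun j => by
    have : r ^ (j + 1) < 1 := pow_lt_one₀ hr0.le hr1 (Nat.succ_ne_zero j)
    linarith
  -- summability of logs
  have hsumr : Summable (fun j : ℕ => r ^ (j + 1)) :=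
    (summable_geometric_of_lt_one hr0.le hr1).comp_injective (add_left_injective 1)
  have hlog : Summable (fun j : ℕ => Real.log (1 - r ^ (j + 1))) := by
    rw [← summable_neg_iff]
    apply Summable.of_nonneg_of_le (fun j => ?_) (fun j => ?_)
      (hsumr.mul_left (1 - r)⁻¹)
    · have : Real.log (1 - r ^ (j + 1)) ≤ 0 := by
        apply Real.log_nonpos (hpos j).le
        have : 0 ≤ r ^ (j + 1) := by positivity
        linarith
      linarith
    · have h1 : 0 < 1 - r ^ (j + 1) := hpos j
      have h2 : -Real.log (1 - r ^ (j + 1)) = Real.log (1 - r ^ (j + 1))⁻¹ := by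
        rw [Real.log_inv]
      rw [h2]
      have h3 : Real.log (1 - r ^ (j + 1))⁻¹ ≤ (1 - r ^ (j + 1))⁻¹ - 1 :=
        Real.log_le_sub_one_of_pos (by positivity)
      have h4 : (1 - r ^ (j + 1))⁻¹ - 1 = r ^ (j + 1) / (1 - r ^ (j + 1)) := by
        field_simp
        ring
      have h5 : r ^ (j + 1) ≤ r := by
        calc r ^ (j + 1) ≤ r ^ 1 := pow_le_pow_of_le_one hr0.le hr1.le (by omega)
        _ = r := pow_one r
      have h6 : r ^ (j + 1) / (1 - r ^ (j + 1)) ≤ (1 - r)⁻¹ * r ^ (j + 1) := by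
        rw [show (1 - r)⁻¹ * r ^ (j + 1) = r ^ (j + 1) / (1 - r) by ring]
        gcongr
        all_goals first | positivity | linarith
      linarith [h3, h4 ▸ h3]
  -- HasProd via exp of sum of logs
  have hp : HasProd (fun j : ℕ => 1 - r ^ (j + 1)) (∏' j : ℕ, (1 - r ^ (j + 1))) :=
    (Real.multipliable_of_summable_log (f := fun j : ℕ => 1 - r ^ (j + 1))
      hpos hlog).hasProd
  have hmul : Multipliable (fun j : ℕ => 1 - r ^ (j + 1)) := ⟨_, hp⟩
  -- positivity of the product
  have hprodpos : 0 < ∏' j : ℕ, (1 - r ^ (j + 1)) := by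
    have := Real.rexp_tsum_eq_tprod (f := fun j : ℕ => 1 - r ^ (j + 1))
      hpos hlog
    rw [← this]
    exact Real.exp_pos _
  refine ⟨hmul, hprodpos, ?_⟩
  -- identify the partial products
  have key : ∀ n : ℕ, qFactorial q n / q ^ (n * (n - 1) / 2) * ((q - 1) / q) ^ n
      = ∏ j ∈ Finset.range n, (1 - r ^ (j + 1)) := by
    intro n
    have hq1 : q - 1 ≠ 0 := sub_ne_zero.mpr (ne_of_gt hq)
    have hqe : ∀ k : ℕ, (q : ℝ) ^ k ≠ 0 := fun k => pow_ne_zero k (ne_of_gt hq0)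
    have hsum : ∑ j ∈ Finset.range n, (j + 1) = n * (n - 1) / 2 + n := by
      have := Finset.sum_range_id_mul_two n
      rw [Finset.sum_add_distrib, Finset.sum_const, Finset.card_range, smul_eq_mul, mul_one]
      omega
    have hprodq : ∏ j ∈ Finset.range n, q ^ (j + 1) = q ^ (n * (n - 1) / 2) * q ^ n := by
      rw [Finset.prod_pow_eq_pow_sum, hsum, pow_add]
    have hfact : qFactorial q n = (∏ j ∈ Finset.range n, (q ^ (j + 1) - 1)) / (q - 1) ^ n := by
      rw [qFactorial, Finset.prod_div_distrib, Finset.prod_const, Finset.card_range]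
    rw [hfact, div_pow]
    rw [show ∏ j ∈ Finset.range n, (1 - r ^ (j + 1))
        = ∏ j ∈ Finset.range n, ((q ^ (j + 1) - 1) / q ^ (j + 1)) from
      Finset.prod_congr rfl fun j _ => by
        rw [hr, inv_pow]
        field_simp]
    rw [Finset.prod_div_distrib, hprodq]
    field_simp
  have := hp.tendsto_prod_nat
  exact Tendsto.congr (fun n => (key n).symm) this
end

section
/- Let q>1 be a real number. Then the zero set of the entire function exp_q is exactly { −q^{m+1}/(q−1) : m ∈ ℕ, m ≥ 0 }; that is, exp_q(z) = 0 if and only if z = −q^{m+1}/(q−1) for some integer m ≥ 0. -/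
set_option autoImplicit false

open Complex Real

lemma qFactorial_succ (q : ℝ) (n : ℕ) :
    qFactorial q (n+1) = qFactorial q n * ((q ^ (n + 1) - 1) / (q - 1)) :=
  Finset.prod_range_succ _ _

lemma one_le_qFactorial (q : ℝ) (hq : 1 < q) (n : ℕ) : 1 ≤ qFactorial q n := by
  induction n with
  | zero => simp [qFactorial]
  | succ n ih =>
    rw [qFactorial_succ]
    have hf : 1 ≤ (q ^ (n + 1) - 1) / (q - 1) := by
      rw [le_div_iff₀ (by linarith)]
      have : q ^ 1 ≤ q ^ (n+1) := pow_le_pow_right₀ (by linarith) (by omega)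
      simpa using this
    nlinarith

lemma qFactorial_ne_zero (q : ℝ) (hq : 1 < q) (n : ℕ) :
    ((qFactorial q n : ℝ) : ℂ) ≠ 0 := by
  have := one_le_qFactorial q hq n
  exact_mod_cast (by linarith : qFactorial q n ≠ 0)

lemma qExp_summable (q : ℝ) (hq : 1 < q) (z : ℂ) :
    Summable (fun n : ℕ => z ^ n / (qFactorial q n : ℂ)) := by
  apply summable_of_ratio_norm_eventually_le (r := 1/2) (by norm_num)
  have hq0 : (0:ℝ) < q - 1 := by linarith
  obtain ⟨N, hN⟩ := ((tendsto_pow_atTop_atTop_of_one_lt hq).eventually_ge_atTop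
    (2 * ‖z‖)).exists_forall_of_atTop
  filter_upwards [Filter.eventually_ge_atTop N] with n hn
  have h1 : 1 ≤ qFactorial q n := one_le_qFactorial q hq n
  have hfac : (0:ℝ) < (q ^ (n+1) - 1)/(q-1) := by
    apply div_pos _ hq0
    have : (1:ℝ) < q ^ (n+1) := one_lt_pow₀ hq (by omega)
    linarith
  have hbig : (q:ℝ) ^ n ≤ (q ^ (n+1) - 1)/(q - 1) := by
    rw [le_div_iff₀ hq0]
    have : (1:ℝ) ≤ q ^ n := one_le_pow₀ hq.le
    nlinarith [this, pow_succ q n]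
  have h2z : 2 * ‖z‖ ≤ q ^ n := hN n hn
  have key : ‖z ^ (n+1) / (qFactorial q (n+1) : ℂ)‖
      = (‖z‖ / ((q ^ (n+1) - 1)/(q - 1))) * ‖z ^ n / (qFactorial q n : ℂ)‖ := by
    rw [qFactorial_succ, norm_div, norm_div, Complex.norm_real, Complex.norm_real,
      Real.norm_eq_abs, Real.norm_eq_abs, abs_mul, abs_of_pos hfac,
      abs_of_pos (by linarith : (0:ℝ) < qFactorial q n), pow_succ, norm_mul]
    field_simp
  rw [key]
  apply mul_le_mul_of_nonneg_right _ (norm_nonneg _)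
  rw [div_le_iff₀ hfac]
  calc ‖z‖ ≤ q ^ n / 2 := by linarith
    _ ≤ _ := by rw [div_le_iff₀ (by norm_num)]; nlinarith [hbig]

lemma qpow_sub_one_ne (q : ℝ) (hq : 1 < q) (n : ℕ) : ((q:ℂ)) ^ (n+1) - 1 ≠ 0 := by
  have h : (1:ℝ) < q ^ (n+1) := one_lt_pow₀ hq (by omega)
  have : ((q:ℂ)) ^ (n+1) - 1 = ((q ^ (n+1) - 1 : ℝ) : ℂ) := by push_cast; ring
  rw [this]
  exact_mod_cast (by linarith : (q ^ (n+1) - 1 : ℝ) ≠ 0)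

lemma qsub_one_ne (q : ℝ) (hq : 1 < q) : ((q:ℂ)) - 1 ≠ 0 := by
  have := qpow_sub_one_ne q hq 0
  simpa using this

lemma qExp_funEq (q : ℝ) (hq : 1 < q) (z : ℂ) :
    qExp q ((q:ℂ) * z) = (1 + ((q:ℂ) - 1) * z) * qExp q z := by
  have h1 := qExp_summable q hq ((q:ℂ) * z)
  have h2 := qExp_summable q hq z
  have hsub : Summable (fun n : ℕ =>
      ((q:ℂ) * z) ^ n / (qFactorial q n : ℂ) - z ^ n / (qFactorial q n : ℂ)) := h1.sub h2
  have key : qExp q ((q:ℂ) * z) - qExp q z = ((q:ℂ) - 1) * z * qExp q z := by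
    rw [qExp, qExp, ← Summable.tsum_sub h1 h2, Summable.tsum_eq_zero_add hsub]
    have h0 : ((q:ℂ) * z) ^ 0 / (qFactorial q 0 : ℂ) - z ^ 0 / (qFactorial q 0 : ℂ) = 0 := by
      simp
    rw [h0, zero_add]
    have hterm : ∀ n : ℕ,
        ((q:ℂ) * z) ^ (n+1) / (qFactorial q (n+1) : ℂ) - z ^ (n+1) / (qFactorial q (n+1) : ℂ)
        = ((q:ℂ) - 1) * z * (z ^ n / (qFactorial q n : ℂ)) := by
      intro n
      have hF : ((qFactorial q (n+1) : ℝ) : ℂ)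
          = (qFactorial q n : ℂ) * (((q:ℂ) ^ (n+1) - 1) / ((q:ℂ) - 1)) := by
        rw [qFactorial_succ]
        push_cast
        ring
      rw [hF]
      have hn0 := qFactorial_ne_zero q hq n
      have hp := qpow_sub_one_ne q hq n
      have hs := qsub_one_ne q hq
      field_simp
      ring
    calc (∑' n : ℕ, (((q:ℂ) * z) ^ (n+1) / (qFactorial q (n+1) : ℂ)
            - z ^ (n+1) / (qFactorial q (n+1) : ℂ)))
        = ∑' n : ℕ, ((q:ℂ) - 1) * z * (z ^ n / (qFactorial q n : ℂ)) := by
          exact tsum_congr hterm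
      _ = ((q:ℂ) - 1) * z * ∑' n : ℕ, z ^ n / (qFactorial q n : ℂ) :=
          h2.tsum_mul_left _
  linear_combination key

lemma qExp_ne_zero_small (q : ℝ) (hq : 1 < q) (w : ℂ) (hw : ‖w‖ < 1/2) :
    qExp q w ≠ 0 := by
  have hs := qExp_summable q hq w
  have htail : Summable (fun n : ℕ => w ^ (n+1) / (qFactorial q (n+1) : ℂ)) :=
    (summable_nat_add_iff 1).2 hs
  have hsub : ‖qExp q w - 1‖ < 1 := by
    have h1 : qExp q w - 1 = ∑' n : ℕ, w ^ (n+1) / (qFactorial q (n+1) : ℂ) := by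
      rw [qExp, Summable.tsum_eq_zero_add hs]
      simp [qFactorial]
    rw [h1]
    have hw1 : ‖w‖ < 1 := by linarith
    have hb : ∀ n : ℕ, ‖w ^ (n+1) / (qFactorial q (n+1) : ℂ)‖ ≤ ‖w‖ * ‖w‖ ^ n := by
      intro n
      rw [norm_div, Complex.norm_real, Real.norm_eq_abs,
        abs_of_pos (by linarith [one_le_qFactorial q hq (n+1)] : (0:ℝ) < qFactorial q (n+1))]
      calc ‖w ^ (n+1)‖ / qFactorial q (n+1) ≤ ‖w ^ (n+1)‖ / 1 := by
            apply div_le_div_of_nonneg_left (norm_nonneg _) one_pos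
              (one_le_qFactorial q hq (n+1))
        _ = ‖w‖ * ‖w‖ ^ n := by rw [div_one, norm_pow]; ring
    have hgeo : Summable (fun n : ℕ => ‖w‖ * ‖w‖ ^ n) :=
      (summable_geometric_of_lt_one (norm_nonneg _) hw1).mul_left _
    calc ‖∑' n : ℕ, w ^ (n+1) / (qFactorial q (n+1) : ℂ)‖
        ≤ ∑' n : ℕ, ‖w ^ (n+1) / (qFactorial q (n+1) : ℂ)‖ := norm_tsum_le_tsum_norm htail.norm
      _ ≤ ∑' n : ℕ, ‖w‖ * ‖w‖ ^ n := Summable.tsum_le_tsum hb htail.norm hgeo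
      _ = ‖w‖ * (1 - ‖w‖)⁻¹ := by
          rw [Summable.tsum_mul_left _ (summable_geometric_of_lt_one (norm_nonneg _) hw1),
            tsum_geometric_of_lt_one (norm_nonneg _) hw1]
      _ < 1 := by
          rw [← div_eq_mul_inv, div_lt_one (by linarith)]
          linarith
  intro h0
  rw [h0] at hsub
  norm_num at hsub

lemma qExp_step (q : ℝ) (hq : 1 < q) (z : ℂ) (h : qExp q z = 0) :
    z = -((q:ℂ)) / ((q:ℂ) - 1) ∨ qExp q (z / (q:ℂ)) = 0 := by
  have hQ : ((q:ℂ)) ≠ 0 := by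
    exact_mod_cast (by positivity : (q:ℝ) ≠ 0)
  have hfe := qExp_funEq q hq (z / (q:ℂ))
  rw [mul_div_cancel₀ _ hQ, h] at hfe
  rcases mul_eq_zero.1 hfe.symm with hc | hz
  · left
    have hs := qsub_one_ne q hq
    field_simp at hc
    rw [eq_div_iff hs]
    linear_combination hc
  · right; exact hz

lemma qExp_iterate (q : ℝ) (hq : 1 < q) (z : ℂ) (h : qExp q z = 0) (n : ℕ) :
    (∃ m : ℕ, z = -((q : ℂ) ^ (m + 1)) / ((q : ℂ) - 1)) ∨ qExp q (z / (q:ℂ) ^ n) = 0 := by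
  have hQ : ((q:ℂ)) ≠ 0 := by
    exact_mod_cast (by positivity : (q:ℝ) ≠ 0)
  induction n with
  | zero => right; simpa using h
  | succ n ih =>
    rcases ih with h1 | h2
    · exact Or.inl h1
    · rcases qExp_step q hq _ h2 with h3 | h4
      · left
        refine ⟨n, ?_⟩
        have : z = (z / (q:ℂ) ^ n) * (q:ℂ) ^ n := by field_simp
        rw [this, h3]
        rw [neg_div, neg_div, neg_mul]
        congr 1
        rw [div_mul_eq_mul_div, pow_succ]
        ring
      · right
        have : z / (q:ℂ) ^ (n+1) = z / (q:ℂ) ^ n / (q:ℂ) := by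
          rw [div_div, pow_succ]
        rw [this]
        exact h4

lemma qExp_zero_at (q : ℝ) (hq : 1 < q) (m : ℕ) :
    qExp q (-((q : ℂ) ^ (m + 1)) / ((q : ℂ) - 1)) = 0 := by
  have hs := qsub_one_ne q hq
  induction m with
  | zero =>
    have hfe := qExp_funEq q hq (-1 / ((q:ℂ) - 1))
    have hc : 1 + ((q:ℂ) - 1) * (-1 / ((q:ℂ) - 1)) = 0 := by field_simp; ring
    rw [hc, zero_mul] at hfe
    have harg : (q:ℂ) * (-1 / ((q:ℂ) - 1)) = -((q : ℂ) ^ (0 + 1)) / ((q : ℂ) - 1) := by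
      field_simp
      ring
    rw [← harg]
    exact hfe
  | succ m ih =>
    have hfe := qExp_funEq q hq (-((q : ℂ) ^ (m + 1)) / ((q : ℂ) - 1))
    rw [ih, mul_zero] at hfe
    have harg : (q:ℂ) * (-((q : ℂ) ^ (m + 1)) / ((q : ℂ) - 1))
        = -((q : ℂ) ^ (m + 1 + 1)) / ((q : ℂ) - 1) := by
      rw [← mul_div_assoc]
      congr 1
      rw [pow_succ]
      ring
    rw [← harg]
    exact hfe

theorem qExp_zeros (q : ℝ) (hq : 1 < q) (z : ℂ) :
    qExp q z = 0 ↔ ∃ m : ℕ, z = -((q : ℂ) ^ (m + 1)) / ((q : ℂ) - 1) := by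
  constructor
  · intro h
    obtain ⟨n, hn⟩ := pow_unbounded_of_one_lt (2 * ‖z‖) hq
    rcases qExp_iterate q hq z h n with h1 | h2
    · exact h1
    · exfalso
      apply qExp_ne_zero_small q hq (z / (q:ℂ) ^ n) _ h2
      rw [norm_div, norm_pow, Complex.norm_real, Real.norm_eq_abs,
        abs_of_pos (by linarith : (0:ℝ) < q)]
      rw [div_lt_iff₀ (by positivity)]
      nlinarith [norm_nonneg z]
  · rintro ⟨m, rfl⟩
    exact qExp_zero_at q hq m
end
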